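/- Let (X, d_X) be a nonempty compact metric space, F a separable real Hilbert space, Φ : X → F a continuous and injective map, and γ > 0. Then the linear span of the family of functions {x ↦ exp(−γ‖Φ(x) − Φ(y)‖²_F) : y ∈ X} is dense in the space C(X, ℝ) of continuous real-valued functions on X equipped with the supremum norm (equivalently, the Gaussian-type kernel K(x,y) = exp(−γ‖Φ(x) − Φ(y)‖²_F) is universal on X). -/

import Mathlib

open scoped BigOperators

private lemma hasSum_prod_pow_of_nonneg {ι : Type*} {d : ι → ℝ} (hd : ∀ i, 0 ≤ d i)
    {s : ℝ} (h : HasSum d s) (n : ℕ) :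
    HasSum (fun v : Fin n → ι => ∏ k, d (v k)) (s ^ n) := by
  induction n with
  | zero =>
      have : (fun v : Fin 0 → ι => ∏ k, d (v k)) = fun _ => 1 := by
        funext v; simp
      rw [this, pow_zero]
      simpa using hasSum_single (f := fun _ : Fin 0 → ι => (1 : ℝ)) default
        (fun b hb => absurd (Subsingleton.elim b default) hb)
  | succ n ih =>
      have hsummable : Summable (fun p : ι × (Fin n → ι) => d p.1 * ∏ k, d (p.2 k)) :=
        Summable.mul_of_nonneg (f := d) (g := fun v : Fin n → ι => ∏ k, d (v k))
          h.summable ih.summable (fun i => hd i) fun v => Finset.prod_nonneg fun k _ => hd _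
      have hprod : HasSum (fun p : ι × (Fin n → ι) => d p.1 * ∏ k, d (p.2 k)) (s * s ^ n) :=
        HasSum.mul (f := d) (g := fun v : Fin n → ι => ∏ k, d (v k)) h ih hsummable
      have := (Fin.consEquiv (fun _ : Fin (n + 1) => ι) : ι × (Fin n → ι) ≃ (Fin (n + 1) → ι)).symm.hasSum_iff.mpr hprod
      rw [pow_succ']
      convert this using 2 with v
      simp [Function.comp, Fin.prod_univ_succ, Fin.consEquiv, Fin.tail]

private lemma hasSum_prod_pow {ι : Type*} {d : ι → ℝ} (habs : Summable fun i => |d i|)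
    {t : ℝ} (h : HasSum d t) (n : ℕ) :
    HasSum (fun v : Fin n → ι => ∏ k, d (v k)) (t ^ n) := by
  induction n with
  | zero =>
      have : (fun v : Fin 0 → ι => ∏ k, d (v k)) = fun _ => 1 := by
        funext v; simp
      rw [this, pow_zero]
      simpa using hasSum_single (f := fun _ : Fin 0 → ι => (1 : ℝ)) default
        (fun b hb => absurd (Subsingleton.elim b default) hb)
  | succ n ih =>
      have habs' : HasSum (fun i => |d i|) (∑' i, |d i|) := habs.hasSum
      have hA := hasSum_prod_pow_of_nonneg (fun i => abs_nonneg (d i)) habs' n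
      have hnorm1 : Summable fun i => ‖d i‖ := by simpa [Real.norm_eq_abs] using habs
      have hnorm2 : Summable fun v : Fin n → ι => ‖∏ k, d (v k)‖ := by
        simpa [Real.norm_eq_abs, Finset.abs_prod] using hA.summable
      have hsummable : Summable (fun p : ι × (Fin n → ι) => d p.1 * ∏ k, d (p.2 k)) :=
        summable_mul_of_summable_norm (f := d) (g := fun v : Fin n → ι => ∏ k, d (v k))
          hnorm1 hnorm2
      have hprod : HasSum (fun p : ι × (Fin n → ι) => d p.1 * ∏ k, d (p.2 k)) (t * t ^ n) :=
        HasSum.mul (f := d) (g := fun v : Fin n → ι => ∏ k, d (v k)) h ih hsummable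
      have := (Fin.consEquiv (fun _ : Fin (n + 1) => ι) : ι × (Fin n → ι) ≃ (Fin (n + 1) → ι)).symm.hasSum_iff.mpr hprod
      rw [pow_succ']
      convert this using 2 with v
      simp [Function.comp, Fin.prod_univ_succ, Fin.consEquiv, Fin.tail]

private lemma hasSum_exp_series {c : ℝ} (t : ℝ) :
    HasSum (fun n : ℕ => c ^ n / n.factorial * t ^ n) (Real.exp (c * t)) := by
  have := NormedSpace.expSeries_div_hasSum_exp (𝔸 := ℝ) (c * t)
  rw [← Real.exp_eq_exp_ℝ] at this
  have h2 : (fun n : ℕ => c ^ n / n.factorial * t ^ n) = fun n => (c * t) ^ n / n.factorial := by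
    funext n
    rw [mul_pow]
    ring
  rw [h2]
  exact this

private lemma gaussian_key {ι : Type*} {d : ι → ℝ} (habs : Summable fun i => |d i|)
    {t : ℝ} (h : HasSum d t) {c : ℝ} (hc : 0 ≤ c) :
    HasSum (fun j : Σ n : ℕ, (Fin n → ι) => c ^ j.1 / (j.1).factorial * ∏ k, d (j.2 k))
      (Real.exp (c * t)) := by
  set s : ℝ := ∑' i, |d i| with hs
  have habs' : HasSum (fun i => |d i|) s := habs.hasSum
  have hA : ∀ n : ℕ, HasSum (fun v : Fin n → ι => ∏ k, |d (v k)|) (s ^ n) := fun n =>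
    hasSum_prod_pow_of_nonneg (fun i => abs_nonneg (d i)) habs' n
  have hB : ∀ n : ℕ, HasSum (fun v : Fin n → ι => ∏ k, d (v k)) (t ^ n) := fun n =>
    hasSum_prod_pow habs h n
  have houter : HasSum (fun n : ℕ => c ^ n / n.factorial * t ^ n) (Real.exp (c * t)) :=
    hasSum_exp_series t
  have hcn : ∀ n : ℕ, (0:ℝ) ≤ c ^ n / n.factorial := fun n =>
    div_nonneg (pow_nonneg hc n) (Nat.cast_nonneg _)
  have hsig : Summable (fun j : Σ n : ℕ, (Fin n → ι) =>
      |c ^ j.1 / (j.1).factorial * ∏ k, d (j.2 k)|) := by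
    rw [summable_sigma_of_nonneg (fun j => abs_nonneg _)]
    constructor
    · intro n
      have : (fun v : Fin n → ι => |c ^ n / n.factorial * ∏ k, d (v k)|)
          = fun v => c ^ n / n.factorial * ∏ k, |d (v k)| := by
        funext v
        rw [abs_mul, abs_of_nonneg (hcn n), Finset.abs_prod]
      rw [this]
      exact ((hA n).summable.mul_left _)
    · have : ∀ n : ℕ, (∑' v : Fin n → ι, |c ^ n / n.factorial * ∏ k, d (v k)|)
          = c ^ n / n.factorial * s ^ n := by
        intro n
        have : (fun v : Fin n → ι => |c ^ n / n.factorial * ∏ k, d (v k)|)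
            = fun v => c ^ n / n.factorial * ∏ k, |d (v k)| := by
          funext v
          rw [abs_mul, abs_of_nonneg (hcn n), Finset.abs_prod]
        rw [this, ((hA n).mul_left _).tsum_eq]
      simp_rw [this]
      exact (hasSum_exp_series s).summable
  exact HasSum.sigma_of_hasSum houter
    (fun n => (hB n).mul_left _) (summable_abs_iff.mp hsig)

theorem gaussian_type_kernel_universal {X : Type*} {F : Type*}
    [MetricSpace X] [CompactSpace X] [Nonempty X]
    [NormedAddCommGroup F] [InnerProductSpace ℝ F] [CompleteSpace F]
    [TopologicalSpace.SeparableSpace F]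
    (Φ : X → F) (hΦ_cont : Continuous Φ) (hΦ_inj : Function.Injective Φ)
    (γ : ℝ) (hγ : 0 < γ) :
    Dense (↑(Submodule.span ℝ
        {g : C(X, ℝ) | ∃ y : X, ∀ x : X, g x = Real.exp (-γ * ‖Φ x - Φ y‖ ^ 2)}) :
      Set C(X, ℝ)) := by
  classical
  obtain ⟨W, b, -⟩ := exists_hilbertBasis ℝ F
  -- basic continuous maps
  set G : W → C(X, ℝ) := fun i =>
    ⟨fun x => inner (𝕜 := ℝ) (Φ x) (b i), hΦ_cont.inner continuous_const⟩ with hG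
  set U : C(X, ℝ) :=
    ⟨fun x => Real.exp (-γ * ‖Φ x‖ ^ 2),
      Real.continuous_exp.comp (continuous_const.mul (hΦ_cont.norm.pow 2))⟩ with hU
  set J := (Σ n : ℕ, (Fin n → W)) with hJ
  set h : J → C(X, ℝ) := fun j => U * ∏ k : Fin j.1, G (j.2 k) with hh
  set wt : J → ℝ := fun j => Real.sqrt ((2 * γ) ^ j.1 / (j.1).factorial) with hwt
  have hwt_sq : ∀ j : J, wt j ^ 2 = (2 * γ) ^ j.1 / (j.1).factorial := fun j =>
    Real.sq_sqrt (div_nonneg (pow_nonneg (by linarith) _) (Nat.cast_nonneg _))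
  have hwt_pos : ∀ j : J, 0 < wt j := fun j =>
    Real.sqrt_pos.mpr (div_pos (pow_pos (by linarith) _)
      (Nat.cast_pos.mpr (Nat.factorial_pos _)))
  set K : X → X → ℝ := fun x y => Real.exp (-γ * ‖Φ x - Φ y‖ ^ 2) with hK
  -- summability facts
  have hd_sum : ∀ x y : X,
      HasSum (fun i : W => inner (𝕜 := ℝ) (Φ x) (b i) * inner (𝕜 := ℝ) (Φ y) (b i))
        (inner (𝕜 := ℝ) (Φ x) (Φ y)) := by
    intro x y
    have := b.hasSum_inner_mul_inner (Φ x) (Φ y)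
    simpa [real_inner_comm] using this
  have hd_abs : ∀ x y : X,
      Summable (fun i : W => |inner (𝕜 := ℝ) (Φ x) (b i) * inner (𝕜 := ℝ) (Φ y) (b i)|) := by
    intro x y
    have hx := (hd_sum x x).summable
    have hy := (hd_sum y y).summable
    have hxy : Summable (fun i : W =>
        (inner (𝕜 := ℝ) (Φ x) (b i) * inner (𝕜 := ℝ) (Φ x) (b i)
          + inner (𝕜 := ℝ) (Φ y) (b i) * inner (𝕜 := ℝ) (Φ y) (b i)) / 2) :=
      (hx.add hy).div_const 2
    refine Summable.of_nonneg_of_le (fun i => abs_nonneg _) (fun i => ?_) hxy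
    set a := inner (𝕜 := ℝ) (Φ x) (b i)
    set c := inner (𝕜 := ℝ) (Φ y) (b i)
    have h1 : |a * c| = |a| * |c| := abs_mul a c
    nlinarith [sq_nonneg (|a| - |c|), sq_abs a, sq_abs c]
  -- the fundamental expansion
  have hKsum : ∀ x y : X,
      HasSum (fun j : J => (wt j * h j x) * (wt j * h j y)) (K x y) := by
    intro x y
    have hkey := gaussian_key (hd_abs x y) (hd_sum x y) (c := 2 * γ) (by linarith)
    have hmul := hkey.mul_left (U x * U y)
    have hfun : ∀ j : J, U x * U y * ((2 * γ) ^ j.1 / (j.1).factorial *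
          ∏ k, (inner (𝕜 := ℝ) (Φ x) (b (j.2 k)) * inner (𝕜 := ℝ) (Φ y) (b (j.2 k))))
        = (wt j * h j x) * (wt j * h j y) := by
      intro j
      have hprodsplit : (∏ k, (inner (𝕜 := ℝ) (Φ x) (b (j.2 k))
            * inner (𝕜 := ℝ) (Φ y) (b (j.2 k))))
          = (∏ k, inner (𝕜 := ℝ) (Φ x) (b (j.2 k)))
            * ∏ k, inner (𝕜 := ℝ) (Φ y) (b (j.2 k)) := Finset.prod_mul_distrib
      have hx' : h j x = U x * ∏ k, inner (𝕜 := ℝ) (Φ x) (b (j.2 k)) := by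
        simp [hh, ContinuousMap.prod_apply, hG]
      have hy' : h j y = U y * ∏ k, inner (𝕜 := ℝ) (Φ y) (b (j.2 k)) := by
        simp [hh, ContinuousMap.prod_apply, hG]
      rw [hx', hy', hprodsplit, ← hwt_sq j]
      ring
    have hval : U x * U y * Real.exp (2 * γ * inner (𝕜 := ℝ) (Φ x) (Φ y)) = K x y := by
      have hUx : U x = Real.exp (-γ * ‖Φ x‖ ^ 2) := rfl
      have hUy : U y = Real.exp (-γ * ‖Φ y‖ ^ 2) := rfl
      have hns : ‖Φ x - Φ y‖ ^ 2
          = ‖Φ x‖ ^ 2 - 2 * inner (𝕜 := ℝ) (Φ x) (Φ y) + ‖Φ y‖ ^ 2 :=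
        norm_sub_sq_real (Φ x) (Φ y)
      simp only [hUx, hUy, hK]
      rw [← Real.exp_add, ← Real.exp_add, hns]
      congr 1
      ring
    rw [funext hfun] at hmul
    rwa [hval] at hmul
  -- the feature map into ℓ²
  have hmemlp : ∀ x : X, Memℓp (fun j : J => wt j * h j x) 2 := by
    intro x
    apply memℓp_gen
    have hsum := (hKsum x x).summable
    have : (fun j : J => ‖wt j * h j x‖ ^ (2 : ENNReal).toReal)
        = fun j : J => (wt j * h j x) * (wt j * h j x) := by
      funext j
      have : ((2 : ENNReal).toReal) = (2 : ℝ) := by norm_num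
      rw [this, Real.rpow_two, Real.norm_eq_abs, sq_abs, sq]
    rw [this]
    exact hsum
  set ψ : X → lp (fun _ : J => ℝ) 2 := fun x => ⟨fun j => wt j * h j x, hmemlp x⟩ with hψ
  have hψ_apply : ∀ (x : X) (j : J), ψ x j = wt j * h j x := fun x j => rfl
  have hinner : ∀ x y : X, inner (𝕜 := ℝ) (ψ x) (ψ y) = K x y := by
    intro x y
    have h1 : HasSum (fun j : J => inner (𝕜 := ℝ) (ψ x j) (ψ y j))
        (inner (𝕜 := ℝ) (ψ x) (ψ y)) := lp.hasSum_inner (𝕜 := ℝ) (ψ x) (ψ y)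
    have heq : (fun j : J => inner (𝕜 := ℝ) (ψ x j) (ψ y j))
        = fun j : J => (wt j * h j x) * (wt j * h j y) := by
      funext j
      simp [RCLike.inner_apply, hψ_apply]
      ring
    rw [heq] at h1
    exact h1.unique (hKsum x y)
  have hψnorm : ∀ x : X, ‖ψ x‖ ≤ 1 := by
    intro x
    have h1 : ‖ψ x‖ ^ 2 = 1 := by
      rw [← real_inner_self_eq_norm_sq, hinner x x]
      simp [hK]
    nlinarith [norm_nonneg (ψ x)]
  -- the span of sections and its closure
  set S : Set C(X, ℝ) :=
    {g : C(X, ℝ) | ∃ y : X, ∀ x : X, g x = Real.exp (-γ * ‖Φ x - Φ y‖ ^ 2)} with hSdef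
  set M : Submodule ℝ C(X, ℝ) := Submodule.span ℝ S with hMdef
  set Cl : Submodule ℝ C(X, ℝ) := M.topologicalClosure with hCldef
  set sec : X → C(X, ℝ) := fun y =>
    ⟨fun x => K x y, Real.continuous_exp.comp
      (continuous_const.mul (((hΦ_cont.sub continuous_const).norm).pow 2))⟩ with hsecdef
  have hsecM : ∀ y : X, sec y ∈ M := fun y =>
    Submodule.subset_span ⟨y, fun x => rfl⟩
  -- representation of elements of the span of features
  have hrep : ∀ u ∈ Submodule.span ℝ (Set.range ψ),
      ∃ g ∈ M, ∀ x : X, g x = inner (𝕜 := ℝ) (ψ x) u := by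
    intro u hu
    induction hu using Submodule.span_induction with
    | mem u hu =>
        obtain ⟨y, rfl⟩ := hu
        exact ⟨sec y, hsecM y, fun x => by rw [hinner x y]; rfl⟩
    | zero => exact ⟨0, Submodule.zero_mem M, fun x => by simp⟩
    | add u v hu hv ihu ihv =>
        obtain ⟨g1, hg1, e1⟩ := ihu
        obtain ⟨g2, hg2, e2⟩ := ihv
        exact ⟨g1 + g2, Submodule.add_mem M hg1 hg2, fun x => by
          simp [e1 x, e2 x, inner_add_right]⟩
    | smul a u hu ihu =>
        obtain ⟨g, hg, e⟩ := ihu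
        exact ⟨a • g, Submodule.smul_mem M a hg, fun x => by
          simp [e x, real_inner_smul_right]⟩
  -- each basic function h j lies in the closure of the span of sections
  have hhCl : ∀ j : J, h j ∈ Cl := by
    intro j
    set V : Submodule ℝ (lp (fun _ : J => ℝ) 2) :=
      (Submodule.span ℝ (Set.range ψ)).topologicalClosure with hVdef
    haveI : CompleteSpace V :=
      (Submodule.isClosed_topologicalClosure _).completeSpace_coe
    set z : lp (fun _ : J => ℝ) 2 := lp.single 2 j (1 : ℝ) with hzdef
    set z₁ : lp (fun _ : J => ℝ) 2 := (Submodule.orthogonalProjection V z : lp (fun _ : J => ℝ) 2)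
      with hz₁def
    have hψV : ∀ x : X, ψ x ∈ V := fun x =>
      Submodule.le_topologicalClosure _ (Submodule.subset_span (Set.mem_range_self x))
    have hz₁ : ∀ x : X, inner (𝕜 := ℝ) (ψ x) z₁ = wt j * h j x := by
      intro x
      have hperp : z - z₁ ∈ Vᗮ := Submodule.sub_starProjection_mem_orthogonal (K := V) z
      have h0 : inner (𝕜 := ℝ) (ψ x) (z - z₁) = 0 :=
        (Submodule.mem_orthogonal V (z - z₁)).mp hperp (ψ x) (hψV x)
      have h1 : inner (𝕜 := ℝ) (ψ x) z = wt j * h j x := by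
        rw [hzdef, lp.inner_single_right]
        simp [RCLike.inner_apply, hψ_apply]
      have := inner_sub_right (𝕜 := ℝ) (ψ x) z z₁
      rw [h0, h1] at this
      linarith
    have hz₁V : z₁ ∈ closure ((Submodule.span ℝ (Set.range ψ) : Submodule ℝ _) :
        Set (lp (fun _ : J => ℝ) 2)) := by
      rw [← Submodule.topologicalClosure_coe]
      exact SetLike.mem_coe.mpr ((Submodule.orthogonalProjection V z).2)
    suffices hsc : wt j • h j ∈ Cl by
      have := Cl.smul_mem (wt j)⁻¹ hsc
      rwa [smul_smul, inv_mul_cancel₀ (hwt_pos j).ne', one_smul] at this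
    have : wt j • h j ∈ closure (M : Set C(X, ℝ)) := by
      rw [Metric.mem_closure_iff]
      intro ε hε
      rw [Metric.mem_closure_iff] at hz₁V
      obtain ⟨u, huspan, hdist⟩ := hz₁V ε hε
      obtain ⟨g, hgM, hg⟩ := hrep u huspan
      refine ⟨g, hgM, ?_⟩
      rw [dist_eq_norm]
      rw [ContinuousMap.norm_lt_iff _ hε]
      intro x
      have : (wt j • h j - g) x = inner (𝕜 := ℝ) (ψ x) (z₁ - u) := by
        simp [hg x, hz₁ x, inner_sub_right]
      rw [this]
      calc ‖inner (𝕜 := ℝ) (ψ x) (z₁ - u)‖ ≤ ‖ψ x‖ * ‖z₁ - u‖ := norm_inner_le_norm _ _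
        _ ≤ 1 * ‖z₁ - u‖ := mul_le_mul_of_nonneg_right (hψnorm x) (norm_nonneg _)
        _ = dist z₁ u := by rw [one_mul, dist_eq_norm]
        _ < ε := hdist
    rw [← Submodule.topologicalClosure_coe] at this
    exact SetLike.mem_coe.mp this
  -- monomials in the `G i`
  have hUmono : ∀ p : C(X, ℝ), p ∈ Submonoid.closure (Set.range G) →
      ∃ j : J, p = ∏ k : Fin j.1, G (j.2 k) := by
    intro p hp
    induction hp using Submonoid.closure_induction with
    | mem p hp =>
        obtain ⟨i, rfl⟩ := hp
        exact ⟨⟨1, fun _ => i⟩, by simp⟩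
    | one => exact ⟨⟨0, fun k => k.elim0⟩, by simp⟩
    | mul p q hp hq ihp ihq =>
        obtain ⟨⟨m, v⟩, rfl⟩ := ihp
        obtain ⟨⟨n, v'⟩, rfl⟩ := ihq
        refine ⟨⟨m + n, Fin.append v v'⟩, ?_⟩
        show _ = ∏ k : Fin (m + n), G (Fin.append v v' k)
        rw [Fin.prod_univ_add]
        simp [Fin.append_left, Fin.append_right]
  -- U times the algebra generated by the `G i` lies in the closure
  have hUp : ∀ p ∈ Algebra.adjoin ℝ (Set.range G), U * p ∈ Cl := by
    intro p hp
    have hp' : p ∈ Submodule.span ℝ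
        ((Submonoid.closure (Set.range G) : Submonoid C(X, ℝ)) : Set C(X, ℝ)) := by
      have := Algebra.adjoin_eq_span (R := ℝ) (s := Set.range G)
      rw [← this]
      exact hp
    clear hp
    induction hp' using Submodule.span_induction with
    | mem p hp =>
        obtain ⟨j, rfl⟩ := hUmono p hp
        exact hhCl j
    | zero => simpa using Submodule.zero_mem Cl
    | add p q _ _ ihp ihq =>
        have := Submodule.add_mem Cl ihp ihq
        rwa [← mul_add] at this
    | smul a p _ ih =>
        have := Submodule.smul_mem Cl a ih
        rwa [← mul_smul_comm] at this
  -- Stone–Weierstrass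
  have hsep : (Algebra.adjoin ℝ (Set.range G)).SeparatesPoints := by
    intro x y hxy
    have hΦxy : Φ x ≠ Φ y := fun e => hxy (hΦ_inj e)
    have hex : ∃ i : W, inner (𝕜 := ℝ) (Φ x) (b i) ≠ inner (𝕜 := ℝ) (Φ y) (b i) := by
      by_contra hc
      push_neg at hc
      apply hΦxy
      apply b.repr.injective
      apply lp.ext
      funext i
      rw [b.repr_apply_apply, b.repr_apply_apply, real_inner_comm, hc i, real_inner_comm]
    obtain ⟨i, hi⟩ := hex
    exact ⟨⇑(G i), ⟨G i, Algebra.subset_adjoin (Set.mem_range_self i), rfl⟩, hi⟩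
  have hAtop := ContinuousMap.subalgebra_topologicalClosure_eq_top_of_separatesPoints
    (Algebra.adjoin ℝ (Set.range G)) hsep
  -- every continuous function lies in the closure of the span of sections
  have hall : ∀ f : C(X, ℝ), f ∈ Cl := by
    intro f
    set Vexp : C(X, ℝ) :=
      ⟨fun x => Real.exp (γ * ‖Φ x‖ ^ 2),
        Real.continuous_exp.comp (continuous_const.mul (hΦ_cont.norm.pow 2))⟩ with hVexp
    have hUV : ∀ x : X, U x * Vexp x = 1 := by
      intro x
      show Real.exp (-γ * ‖Φ x‖ ^ 2) * Real.exp (γ * ‖Φ x‖ ^ 2) = 1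
      rw [← Real.exp_add]
      rw [show -γ * ‖Φ x‖ ^ 2 + γ * ‖Φ x‖ ^ 2 = 0 by ring, Real.exp_zero]
    have hUnorm : ‖U‖ ≤ 1 := by
      rw [ContinuousMap.norm_le _ zero_le_one]
      intro x
      show ‖Real.exp (-γ * ‖Φ x‖ ^ 2)‖ ≤ 1
      rw [Real.norm_eq_abs, abs_of_pos (Real.exp_pos _)]
      rw [Real.exp_le_one_iff]
      nlinarith [sq_nonneg ‖Φ x‖]
    have hmemcl : f ∈ closure (Cl : Set C(X, ℝ)) := by
      rw [Metric.mem_closure_iff]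
      intro ε hε
      have hfV : (f * Vexp) ∈ closure ((Algebra.adjoin ℝ (Set.range G) : Subalgebra ℝ C(X, ℝ)) :
          Set C(X, ℝ)) := by
        rw [← Subalgebra.topologicalClosure_coe, hAtop]
        trivial
      rw [Metric.mem_closure_iff] at hfV
      obtain ⟨p, hpA, hp⟩ := hfV ε hε
      refine ⟨U * p, SetLike.mem_coe.mpr (hUp p hpA), ?_⟩
      have hfactor : f - U * p = U * (f * Vexp - p) := by
        ext x
        have h1 := hUV x
        simp only [ContinuousMap.sub_apply, ContinuousMap.mul_apply]
        calc f x - U x * p x = f x * (U x * Vexp x) - U x * p x := by rw [h1]; ring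
          _ = U x * (f x * Vexp x - p x) := by ring
      rw [dist_eq_norm, hfactor]
      calc ‖U * (f * Vexp - p)‖ ≤ ‖U‖ * ‖f * Vexp - p‖ := norm_mul_le _ _
        _ ≤ 1 * ‖f * Vexp - p‖ := mul_le_mul_of_nonneg_right hUnorm (norm_nonneg _)
        _ = dist (f * Vexp) p := by rw [one_mul, dist_eq_norm]
        _ < ε := hp
    have hcls : IsClosed (Cl : Set C(X, ℝ)) := Submodule.isClosed_topologicalClosure M
    rw [hcls.closure_eq] at hmemcl
    exact SetLike.mem_coe.mp hmemcl
  rw [dense_iff_closure_eq, ← Submodule.topologicalClosure_coe]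
  exact Set.eq_univ_of_forall fun f => SetLike.mem_coe.mpr (hall f)
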